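/- Let x₀, x₁ be linearly independent positive light-like vectors with horospheres S₀, S₁, and let f(v) = v∘x₀ on S₁. For any fixed r < 0, the set {v ∈ S₁ : f(v) ≥ r} is contained in the closed hyperbolic ball of radius cosh⁻¹(r/(x₀∘x₁) + 1/2) centered at u = (-1/(x₀∘x₁))·x₀ + (1/2)·x₁; equivalently, every v ∈ S₁ with v∘x₀ ≥ r satisfies -v∘u ≤ r/(x₀∘x₁) + 1/2. -/

import Mathlib

open RealInnerProductSpace

/-- The Lorentzian inner product on `ℝ^{n+1}`. -/
def lprod {n : ℕ} (x y : Fin (n + 1) → ℝ) : ℝ :=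
  -(x 0 * y 0) + ∑ i : Fin n, x i.succ * y i.succ

lemma lprod_smul_add {n : ℕ} (v x y : Fin (n + 1) → ℝ) (a b : ℝ) :
    lprod v (a • x + b • y) = a * lprod v x + b * lprod v y := by
  simp only [lprod, Pi.add_apply, Pi.smul_apply, smul_eq_mul]
  rw [show (∑ i : Fin n, v i.succ * (a * x i.succ + b * y i.succ))
      = ∑ i : Fin n, (a * (v i.succ * x i.succ) + b * (v i.succ * y i.succ))
      from Finset.sum_congr rfl fun i _ => by ring,
    Finset.sum_add_distrib, ← Finset.mul_sum, ← Finset.mul_sum]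
  ring

lemma lprod_neg_of_null {n : ℕ} (x₀ x₁ : Fin (n + 1) → ℝ)
    (hind : LinearIndependent ℝ ![x₀, x₁])
    (h₀ : lprod x₀ x₀ = 0) (h₀pos : 0 < x₀ 0)
    (h₁ : lprod x₁ x₁ = 0) (h₁pos : 0 < x₁ 0) :
    lprod x₀ x₁ < 0 := by
  set y₀ : EuclideanSpace ℝ (Fin n) := WithLp.toLp 2 (fun i => x₀ i.succ) with hy₀
  set y₁ : EuclideanSpace ℝ (Fin n) := WithLp.toLp 2 (fun i => x₁ i.succ) with hy₁
  have hinner : ⟪y₀, y₁⟫ = ∑ i : Fin n, x₀ i.succ * x₁ i.succ := by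
    simp [PiLp.inner_apply, hy₀, hy₁, RCLike.inner_apply, conj_trivial, mul_comm]
  have hn : ∀ (x : Fin (n + 1) → ℝ) (y : EuclideanSpace ℝ (Fin n)),
      (∀ i, y i = x i.succ) → lprod x x = 0 → 0 < x 0 → ‖y‖ = x 0 := by
    intro x y hyx hx hxpos
    have hsq : ‖y‖ ^ 2 = x 0 ^ 2 := by
      rw [← real_inner_self_eq_norm_sq]
      simp only [PiLp.inner_apply, RCLike.inner_apply, conj_trivial, hyx]
      simp only [lprod] at hx
      nlinarith [hx]
    nlinarith [norm_nonneg y, hsq, hxpos]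
  have hn₀ : ‖y₀‖ = x₀ 0 := hn x₀ y₀ (fun i => rfl) h₀ h₀pos
  have hn₁ : ‖y₁‖ = x₁ 0 := hn x₁ y₁ (fun i => rfl) h₁ h₁pos
  have hcs : ⟪y₀, y₁⟫ ≤ ‖y₀‖ * ‖y₁‖ := real_inner_le_norm y₀ y₁
  have hle : lprod x₀ x₁ ≤ 0 := by
    simp only [lprod]
    rw [← hinner]
    nlinarith [hcs, hn₀, hn₁]
  rcases hle.lt_or_eq with h | h
  · exact h
  -- equality case: Cauchy–Schwarz equality forces linear dependence
  exfalso
  have heq : ⟪y₀, y₁⟫ = ‖y₀‖ * ‖y₁‖ := by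
    simp only [lprod] at h
    rw [hinner, hn₀, hn₁]
    linarith [h]
  have hsm : ‖y₁‖ • y₀ = ‖y₀‖ • y₁ := inner_eq_norm_mul_iff_real.mp heq
  have hfull : (x₁ 0) • x₀ = (x₀ 0) • x₁ := by
    funext j
    refine Fin.cases ?_ ?_ j
    · simp [mul_comm]
    · intro i
      have := congrArg (fun z : EuclideanSpace ℝ (Fin n) => z i) hsm
      simp only [PiLp.smul_apply, smul_eq_mul, hn₀, hn₁] at this
      simpa [hy₀, hy₁] using this
  have := (LinearIndependent.pair_iff.mp hind (x₁ 0) (-(x₀ 0))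
    (by rw [neg_smul, ← hfull]; abel)).1
  exact absurd this h₁pos.ne'

/-- Sublevel-set compactness: points of `S₁` where `v∘x₀ ≥ r` lie in a fixed
closed hyperbolic ball about `u = (-1/(x₀∘x₁))x₀ + (1/2)x₁`. -/
theorem horosphere_sublevel_in_ball {n : ℕ} (x₀ x₁ : Fin (n + 1) → ℝ)
    (hind : LinearIndependent ℝ ![x₀, x₁])
    (h₀ : lprod x₀ x₀ = 0) (h₀pos : 0 < x₀ 0)
    (h₁ : lprod x₁ x₁ = 0) (h₁pos : 0 < x₁ 0)
    (r : ℝ) (hr : r < 0)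
    (v : Fin (n + 1) → ℝ)
    (hvH : lprod v v = -1) (hvpos : 0 < v 0) (hvS : lprod v x₁ = -1)
    (hvr : r ≤ lprod v x₀) :
    -lprod v ((-1 / lprod x₀ x₁) • x₀ + (1 / 2 : ℝ) • x₁) ≤
      r / lprod x₀ x₁ + 1 / 2 := by
  have hc : lprod x₀ x₁ < 0 := lprod_neg_of_null x₀ x₁ hind h₀ h₀pos h₁ h₁pos
  rw [lprod_smul_add, hvS]
  have hcinv : (lprod x₀ x₁)⁻¹ < 0 := inv_neg''.mpr hc
  have hmul : lprod v x₀ * (lprod x₀ x₁)⁻¹ ≤ r * (lprod x₀ x₁)⁻¹ :=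
    mul_le_mul_of_nonpos_right hvr hcinv.le
  simp only [div_eq_mul_inv]
  nlinarith [hmul]
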